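/- Let A be a finite abelian group, A* := Hom(A, ℂˣ), and let q(a,f) := f(a) be the hyperbolic quadratic form on A ⊕ A*. Then the map τ sending a pair (H,ψ) — where H ≤ A is a subgroup and ψ is a skew-symmetric bicharacter of H — to τ(H,ψ) := {(h,z) ∈ A ⊕ A* : h ∈ H and z(h') = ψ(h,h') for all h' ∈ H} is a bijection from the set of such pairs onto the set of Lagrangian subgroups of (A ⊕ A*, q). -/

import Mathlib

/-- The character group `A* = Hom(A, ℂˣ)` of a finite abelian group, written additively. -/
abbrev Adual (A : Type*) [AddCommGroup A] : Type _ := Additive (AddChar A ℂˣ)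

/-- The hyperbolic quadratic form `q(a,f) = f(a)` on `A ⊕ A*`. -/
def hypQ (A : Type*) [AddCommGroup A] : A × Adual A → ℂˣ :=
  fun p => (Additive.toMul p.2) p.1

/-- The subset `τ(H,ψ) = {(h,z) : h ∈ H, z|_H = ψ(h,·)}` of `A ⊕ A*`. -/
def tauSet {A : Type*} [AddCommGroup A] (H : AddSubgroup A) (ψ : ↥H → ↥H → ℂˣ) :
    Set (A × Adual A) :=
  {p | ∃ hm : p.1 ∈ H, ∀ h' : H, (Additive.toMul p.2) (h' : A) = ψ ⟨p.1, hm⟩ h'}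

/-- `ψ` is a skew-symmetric bicharacter on the subgroup `H`. -/
def IsSkewBichar {A : Type*} [AddCommGroup A] (H : AddSubgroup A)
    (ψ : ↥H → ↥H → ℂˣ) : Prop :=
  (∀ x y z : H, ψ (x + y) z = ψ x z * ψ y z) ∧
  (∀ x y z : H, ψ x (y + z) = ψ x y * ψ x z) ∧
  (∀ x : H, ψ x x = 1)

/-! ### Auxiliary material -/

private lemma units_zpow_surj (u : ℂˣ) {n : ℤ} (hn : n ≠ 0) : ∃ w : ℂˣ, w ^ n = u := by
  have key : ∀ (v : ℂˣ) {m : ℕ}, 0 < m → ∃ w : ℂˣ, w ^ m = v := by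
    intro v m hm
    obtain ⟨z, hz⟩ := IsAlgClosed.exists_pow_nat_eq (v : ℂ) hm
    have hz0 : z ≠ 0 := by
      rintro rfl
      exact v.ne_zero (by simpa [zero_pow hm.ne'] using hz.symm)
    refine ⟨Units.mk0 z hz0, Units.ext ?_⟩
    simpa using hz
  rcases hn.lt_or_gt with h | h
  · obtain ⟨w, hw⟩ := key u⁻¹ (Int.natAbs_pos.mpr hn)
    have hn' : n = -(n.natAbs : ℤ) := by omega
    exact ⟨w, by rw [hn', zpow_neg, zpow_natCast, hw, inv_inv]⟩
  · obtain ⟨w, hw⟩ := key u (Int.natAbs_pos.mpr hn)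
    have hn' : n = (n.natAbs : ℤ) := by omega
    exact ⟨w, by rw [hn', zpow_natCast, hw]⟩

noncomputable instance : DivisibleBy (Additive ℂˣ) ℤ :=
  divisibleByOfSMulRightSurj _ _ fun {n} hn x => by
    obtain ⟨w, hw⟩ := units_zpow_surj (Additive.toMul x) hn
    refine ⟨Additive.ofMul w, Additive.toMul.injective ?_⟩
    rw [toMul_zsmul]
    exact hw

private lemma exists_char_extend {A : Type*} [AddCommGroup A] (H : AddSubgroup A)
    (f : ↥H → ℂˣ) (hf : ∀ x y, f (x + y) = f x * f y) :
    ∃ z : AddChar A ℂˣ, ∀ h : ↥H, z ↑h = f h := by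
  obtain ⟨Φ, hΦ⟩ := (Module.Baer.of_divisible (Additive ℂˣ)).extension_property_addMonoidHom
    H.subtype Subtype.val_injective
    (AddMonoidHom.mk' (fun h => Additive.ofMul (f h)) (fun a b => by
      rw [hf, ofMul_mul]))
  refine ⟨AddChar.toAddMonoidHomEquiv.symm Φ, fun h => ?_⟩
  have h1 : Φ ↑h = Additive.ofMul (f h) := by
    simpa using DFunLike.congr_fun hΦ h
  rw [AddChar.toAddMonoidHomEquiv_symm_apply, h1]
  rfl

/-- Restriction of characters (in `AddMonoidHom` form) to a subgroup. -/
private def resHom {A : Type*} [AddCommGroup A] (H : AddSubgroup A) :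
    (A →+ Additive ℂˣ) →+ (↥H →+ Additive ℂˣ) :=
  AddMonoidHom.mk' (fun Φ => Φ.comp H.subtype) (fun a b => AddMonoidHom.add_comp a b H.subtype)

private lemma resHom_apply {A : Type*} [AddCommGroup A] (H : AddSubgroup A)
    (Φ : A →+ Additive ℂˣ) (h : ↥H) : resHom H Φ h = Φ ↑h := rfl

private lemma resHom_surjective {A : Type*} [AddCommGroup A] (H : AddSubgroup A) :
    Function.Surjective (resHom H) := by
  intro f
  obtain ⟨Φ, hΦ⟩ := (Module.Baer.of_divisible (Additive ℂˣ)).extension_property_addMonoidHom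
    H.subtype Subtype.val_injective f
  exact ⟨Φ, hΦ⟩

private lemma card_addChar (B : Type*) [AddCommGroup B] [Finite B] :
    Nat.card (AddChar B ℂˣ) = Nat.card B := by
  haveI : NeZero (Monoid.exponent (Multiplicative B)) := ⟨Monoid.exponent_ne_zero_of_finite⟩
  obtain ⟨e⟩ := CommGroup.monoidHom_mulEquiv_of_hasEnoughRootsOfUnity (Multiplicative B) ℂ
  calc Nat.card (AddChar B ℂˣ) = Nat.card (Multiplicative B →* ℂˣ) :=
        Nat.card_congr AddChar.toMonoidHomEquiv
    _ = Nat.card (Multiplicative B) := Nat.card_congr e.toEquiv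
    _ = Nat.card B := rfl

private instance finite_addChar (B : Type*) [AddCommGroup B] [Finite B] :
    Finite (AddChar B ℂˣ) := by
  haveI : NeZero (Monoid.exponent (Multiplicative B)) := ⟨Monoid.exponent_ne_zero_of_finite⟩
  obtain ⟨e⟩ := CommGroup.monoidHom_mulEquiv_of_hasEnoughRootsOfUnity (Multiplicative B) ℂ
  exact Finite.of_equiv _ (AddChar.toMonoidHomEquiv.trans e.toEquiv).symm

private lemma card_adual (A : Type*) [AddCommGroup A] [Finite A] :
    Nat.card (Adual A) = Nat.card A := by
  rw [show Nat.card (Adual A) = Nat.card (AddChar A ℂˣ) from Nat.card_congr Additive.toMul,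
    card_addChar]

/-! ### Skew bicharacter basic facts -/

section Skew
variable {A : Type*} [AddCommGroup A] {H : AddSubgroup A} {ψ : ↥H → ↥H → ℂˣ}

private lemma skew_zero_left (hψ : IsSkewBichar H ψ) (z : ↥H) : ψ 0 z = 1 := by
  have h := hψ.1 0 0 z
  rw [add_zero] at h
  exact left_eq_mul.mp h

private lemma skew_zero_right (hψ : IsSkewBichar H ψ) (x : ↥H) : ψ x 0 = 1 := by
  have h := hψ.2.1 x 0 0
  rw [add_zero] at h
  exact left_eq_mul.mp h

private lemma skew_neg_left (hψ : IsSkewBichar H ψ) (x z : ↥H) : ψ (-x) z = (ψ x z)⁻¹ := by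
  have h := hψ.1 x (-x) z
  rw [add_neg_cancel, skew_zero_left hψ] at h
  exact (inv_eq_of_mul_eq_one_right h.symm).symm

end Skew

/-! ### τ as a subgroup and its cardinality -/

private def tauSubgroup {A : Type*} [AddCommGroup A] (H : AddSubgroup A)
    (ψ : ↥H → ↥H → ℂˣ) (hψ : IsSkewBichar H ψ) : AddSubgroup (A × Adual A) where
  carrier := tauSet H ψ
  zero_mem' := by
    refine ⟨H.zero_mem, fun h' => ?_⟩
    exact (skew_zero_left hψ h').symm
  add_mem' := by
    rintro p q ⟨hp1, hp2⟩ ⟨hq1, hq2⟩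
    refine ⟨H.add_mem hp1 hq1, fun h' => ?_⟩
    have key : Additive.toMul (p.2 + q.2) (h' : A)
        = ψ (⟨p.1, hp1⟩ + ⟨q.1, hq1⟩) h' := by
      rw [toMul_add, AddChar.mul_apply, hp2 h', hq2 h', ← hψ.1]
    exact key
  neg_mem' := by
    rintro p ⟨hp1, hp2⟩
    refine ⟨H.neg_mem hp1, fun h' => ?_⟩
    have key : Additive.toMul (-p.2) (h' : A) = ψ (-⟨p.1, hp1⟩) h' := by
      rw [toMul_neg, AddChar.inv_apply, AddChar.map_neg_eq_inv, hp2 h',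
        skew_neg_left hψ]
    exact key

private lemma card_tau {A : Type*} [AddCommGroup A] [Finite A] (H : AddSubgroup A)
    (ψ : ↥H → ↥H → ℂˣ) (hψ : IsSkewBichar H ψ) :
    Nat.card ↥(tauSubgroup H ψ hψ) = Nat.card A := by
  classical
  choose σ hσ using fun h : ↥H => exists_char_extend H (ψ h) (hψ.2.1 h)
  set Kr := (resHom (A := A) H).ker with hKr
  let F : ↥H × ↥Kr → ↥(tauSubgroup H ψ hψ) := fun x =>
    ⟨(↑x.1, Additive.ofMul (σ x.1 * AddChar.toAddMonoidHomEquiv.symm ↑x.2)),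
      x.1.2, fun h' => by
        have hker : (x.2 : A →+ Additive ℂˣ) (h' : A) = 0 :=
          DFunLike.congr_fun (AddMonoidHom.mem_ker.mp x.2.2) h'
        simp only [toMul_ofMul, AddChar.mul_apply, AddChar.toAddMonoidHomEquiv_symm_apply,
          hker, toMul_zero, mul_one]
        exact hσ x.1 h'⟩
  have hFbij : Function.Bijective F := by
    constructor
    · rintro ⟨h₁, k₁⟩ ⟨h₂, k₂⟩ hEq
      have h12 : (h₁ : A) = (h₂ : A) :=
        congrArg (fun t => ((t : A × Adual A)).1) (congrArg Subtype.val hEq)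
      have hh : h₁ = h₂ := Subtype.ext h12
      subst hh
      have h22 : Additive.ofMul (σ h₁ * AddChar.toAddMonoidHomEquiv.symm ↑k₁)
          = Additive.ofMul (σ h₁ * AddChar.toAddMonoidHomEquiv.symm ↑k₂) :=
        congrArg (fun t => ((t : A × Adual A)).2) (congrArg Subtype.val hEq)
      have h22' : σ h₁ * AddChar.toAddMonoidHomEquiv.symm (↑k₁ : A →+ Additive ℂˣ)
          = σ h₁ * AddChar.toAddMonoidHomEquiv.symm ↑k₂ := Additive.ofMul.injective h22
      have h2 : AddChar.toAddMonoidHomEquiv.symm (↑k₁ : A →+ Additive ℂˣ)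
          = AddChar.toAddMonoidHomEquiv.symm ↑k₂ := by
        calc AddChar.toAddMonoidHomEquiv.symm (↑k₁ : A →+ Additive ℂˣ)
            = (σ h₁)⁻¹ * (σ h₁ * AddChar.toAddMonoidHomEquiv.symm ↑k₁) := by
              rw [inv_mul_cancel_left]
          _ = (σ h₁)⁻¹ * (σ h₁ * AddChar.toAddMonoidHomEquiv.symm ↑k₂) := by rw [h22']
          _ = AddChar.toAddMonoidHomEquiv.symm ↑k₂ := by rw [inv_mul_cancel_left]
      have : (↑k₁ : A →+ Additive ℂˣ) = ↑k₂ :=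
        AddChar.toAddMonoidHomEquiv.symm.injective h2
      exact Prod.ext rfl (Subtype.ext this)
    · rintro ⟨⟨a, z⟩, hmem⟩
      obtain ⟨hm, hz⟩ := hmem
      dsimp only at hm hz
      have hkmem : AddChar.toAddMonoidHomEquiv (Additive.toMul z / σ ⟨a, hm⟩) ∈ Kr := by
        rw [hKr, AddMonoidHom.mem_ker]
        ext h'
        rw [resHom_apply, AddMonoidHom.zero_apply, AddChar.toAddMonoidHomEquiv_apply,
          AddChar.div_apply, AddChar.map_neg_eq_inv, hz h', hσ ⟨a, hm⟩ h', mul_inv_cancel]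
        rfl
      refine ⟨(⟨a, hm⟩, ⟨_, hkmem⟩), ?_⟩
      have hsnd : Additive.ofMul (σ ⟨a, hm⟩ *
          AddChar.toAddMonoidHomEquiv.symm (AddChar.toAddMonoidHomEquiv
            (Additive.toMul z / σ ⟨a, hm⟩))) = z := by
        rw [Equiv.symm_apply_apply,
          show σ ⟨a, hm⟩ * (Additive.toMul z / σ ⟨a, hm⟩) = Additive.toMul z by
            rw [div_eq_mul_inv, ← mul_assoc, mul_comm (σ ⟨a, hm⟩) (Additive.toMul z),
              mul_assoc, mul_inv_cancel, mul_one]]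
        exact ofMul_toMul z
      exact Subtype.ext (Prod.ext rfl hsnd)
  have e1 : Nat.card ↥(tauSubgroup H ψ hψ) = Nat.card ↥H * Nat.card ↥Kr := by
    rw [← Nat.card_prod]
    exact (Nat.card_eq_of_bijective F hFbij).symm
  have e2 : Nat.card (A →+ Additive ℂˣ) = Nat.card (↥H →+ Additive ℂˣ) * Nat.card ↥Kr := by
    rw [AddSubgroup.card_eq_card_quotient_mul_card_addSubgroup Kr]
    congr 1
    exact Nat.card_congr
      (QuotientAddGroup.quotientKerEquivOfSurjective _ (resHom_surjective H)).toEquiv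
  have e3 : Nat.card (A →+ Additive ℂˣ) = Nat.card A := by
    rw [show Nat.card (A →+ Additive ℂˣ) = Nat.card (AddChar A ℂˣ) from
      Nat.card_congr AddChar.toAddMonoidHomEquiv.symm, card_addChar]
  have e4 : Nat.card (↥H →+ Additive ℂˣ) = Nat.card ↥H := by
    rw [show Nat.card (↥H →+ Additive ℂˣ) = Nat.card (AddChar ↥H ℂˣ) from
      Nat.card_congr AddChar.toAddMonoidHomEquiv.symm, card_addChar]
  rw [e1, ← e4, ← e2, e3]

/-- Well-definedness: two elements of a "Lagrangian" `K` with the same first coordinate have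
characters agreeing on first coordinates of `K`. -/
private lemma tau_wd {A : Type*} [AddCommGroup A] {K : AddSubgroup (A × Adual A)}
    (hK1 : ∀ x ∈ K, hypQ A x = 1) {a b : A} {z z' w : Adual A}
    (hz : (a, z) ∈ K) (hz' : (a, z') ∈ K) (hw : (b, w) ∈ K) :
    Additive.toMul z b = Additive.toMul z' b := by
  have hd : ((0 : A), z - z') ∈ K := by
    have h := K.sub_mem hz hz'
    rwa [Prod.mk_sub_mk, sub_self] at h
  have h1 : (b, w + (z - z')) ∈ K := by
    have h := K.add_mem hw hd
    rwa [Prod.mk_add_mk, add_zero] at h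
  have q1 : Additive.toMul (w + (z - z')) b = 1 := hK1 _ h1
  have q2 : Additive.toMul w b = 1 := hK1 _ hw
  rw [toMul_add, toMul_sub, AddChar.mul_apply, AddChar.div_apply, AddChar.map_neg_eq_inv,
    q2, one_mul, mul_inv_eq_one] at q1
  exact q1

/-- The assignment `(H,ψ) ↦ τ(H,ψ)` is a bijection between pairs (a subgroup of `A` with
a skew-symmetric bicharacter on it) and Lagrangian subgroups of `(A ⊕ A*, q)`. -/
theorem stmt15 {A : Type*} [AddCommGroup A] [Fintype A] :
    Function.Injective
        (fun p : {p : Σ H : AddSubgroup A, (↥H → ↥H → ℂˣ) // IsSkewBichar p.1 p.2} =>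
          tauSet p.1.1 p.1.2) ∧
      Set.range
          (fun p : {p : Σ H : AddSubgroup A, (↥H → ↥H → ℂˣ) // IsSkewBichar p.1 p.2} =>
            tauSet p.1.1 p.1.2) =
        {S : Set (A × Adual A) | ∃ K : AddSubgroup (A × Adual A),
          (K : Set (A × Adual A)) = S ∧ (∀ x ∈ K, hypQ A x = 1) ∧
          Nat.card K ^ 2 = Nat.card (A × Adual A)} := by
  classical
  have key : ∀ (H : AddSubgroup A) (ψ : ↥H → ↥H → ℂˣ) (hψ : IsSkewBichar H ψ) (x : ↥H),
      ∃ z : AddChar A ℂˣ, ((x : A), Additive.ofMul z) ∈ tauSet H ψ ∧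
        ∀ h' : ↥H, z ↑h' = ψ x h' := by
    intro H ψ hψ x
    obtain ⟨z, hz⟩ := exists_char_extend H (ψ x) (hψ.2.1 x)
    exact ⟨z, ⟨x.2, fun h' => hz h'⟩, hz⟩
  constructor
  · rintro ⟨⟨H₁, ψ₁⟩, hp⟩ ⟨⟨H₂, ψ₂⟩, hq⟩ h
    dsimp only at h
    have hH : H₁ = H₂ := by
      ext a
      constructor
      · intro ha
        obtain ⟨z, hmem, -⟩ := key H₁ ψ₁ hp ⟨a, ha⟩
        rw [h] at hmem
        exact hmem.1
      · intro ha
        obtain ⟨z, hmem, -⟩ := key H₂ ψ₂ hq ⟨a, ha⟩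
        rw [← h] at hmem
        exact hmem.1
    subst hH
    have hψeq : ψ₁ = ψ₂ := by
      funext x y
      obtain ⟨z, hmem, hz⟩ := key H₁ ψ₁ hp x
      rw [h] at hmem
      obtain ⟨hm, hval⟩ := hmem
      exact (hz y).symm.trans (hval y)
    subst hψeq
    exact Subtype.ext rfl
  · ext S
    simp only [Set.mem_range, Set.mem_setOf_eq]
    constructor
    · rintro ⟨⟨⟨H, ψ⟩, hψ⟩, rfl⟩
      refine ⟨tauSubgroup H ψ hψ, rfl, ?_, ?_⟩
      · rintro ⟨a, z⟩ hx
        obtain ⟨hm, hval⟩ := hx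
        exact (hval ⟨a, hm⟩).trans (hψ.2.2 ⟨a, hm⟩)
      · rw [card_tau H ψ hψ, Nat.card_prod, card_adual, sq]
    · rintro ⟨K, rfl, hK1, hKc⟩
      set H := K.map (AddMonoidHom.fst A (Adual A)) with hHdef
      have exz : ∀ h : ↥H, ∃ z : Adual A, ((h : A), z) ∈ K := by
        intro h
        obtain ⟨x, hxK, hx1⟩ := AddSubgroup.mem_map.mp h.2
        exact ⟨x.2, by rwa [show ((h : A), x.2) = x from Prod.ext hx1.symm rfl]⟩
      choose zf hzf using exz
      set ψK : ↥H → ↥H → ℂˣ := fun x y => Additive.toMul (zf x) ↑y with hψK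
      have hskew : IsSkewBichar H ψK := by
        refine ⟨?_, ?_, ?_⟩
        · intro x y u
          have hxy : ((↑(x + y) : A), zf x + zf y) ∈ K := by
            have h := K.add_mem (hzf x) (hzf y)
            rwa [Prod.mk_add_mk] at h
          have hwd := tau_wd hK1 (hzf (x + y)) hxy (hzf u)
          show Additive.toMul (zf (x + y)) ↑u
            = Additive.toMul (zf x) ↑u * Additive.toMul (zf y) ↑u
          rw [hwd, toMul_add, AddChar.mul_apply]
        · intro x y u
          show Additive.toMul (zf x) ↑(y + u)
            = Additive.toMul (zf x) ↑y * Additive.toMul (zf x) ↑u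
          rw [show ((↑(y + u) : A)) = ↑y + ↑u from rfl, AddChar.map_add_eq_mul]
        · intro x
          exact hK1 _ (hzf x)
      have hsub : (K : Set (A × Adual A)) ⊆ tauSet H ψK := by
        rintro ⟨a, z⟩ hx
        have haH : a ∈ H := AddSubgroup.mem_map.mpr ⟨(a, z), hx, rfl⟩
        exact ⟨haH, fun h' => tau_wd hK1 hx (hzf ⟨a, haH⟩) (hzf h')⟩
      have hcardK : Nat.card ↥K = Nat.card A := by
        have h2 : Nat.card (A × Adual A) = Nat.card A ^ 2 := by
          rw [Nat.card_prod, card_adual, sq]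
        have hpow : Nat.card ↥K ^ 2 = Nat.card A ^ 2 := by rw [hKc, h2]
        exact Nat.pow_left_injective (n := 2) (by norm_num) hpow
      have hset : (K : Set (A × Adual A)) = tauSet H ψK := by
        refine Set.eq_of_subset_of_ncard_le hsub ?_ (Set.toFinite _)
        have e1 : (tauSet H ψK).ncard = Nat.card A := by
          rw [← Nat.card_coe_set_eq]
          exact card_tau H ψK hskew
        have e2 : (K : Set (A × Adual A)).ncard = Nat.card A := by
          rw [← Nat.card_coe_set_eq]
          exact hcardK
        rw [e1, e2]
      exact ⟨⟨⟨H, ψK⟩, hskew⟩, hset.symm⟩
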